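/- Assume (A12, A22) is observable, (A, B) is controllable, and K ∈ ℝ^{(n−p)×p} is such that A22 + K·A12 is Hurwitz (so the SRTR pair (W, V) is stable). Let Gp ∈ F^{m×p} (the plant) and set Kc := (λI_p − W)^{-1}·V ∈ F^{p×m}. Assume the (p+m)×(p+m) block matrix L := [[I_p, −Kc],[−Gp, I_m]] is invertible over F and every entry of L^{-1} is stable (i.e. Kc is a stabilizing controller for Gp). Then I_p − λ^{-1}·W − λ^{-1}·V·Gp is invertible over F and every entry of the (2p+m)×(2p+m) matrix H := [I_p; I_p; Gp]·(I_p − λ^{-1}·W − λ^{-1}·V·Gp)^{-1}·[I_p, λ^{-1}·W, λ^{-1}·V] is stable; that is, the SRTR-based implementation K_d(λ) = [λ^{-1}·W, λ^{-1}·V] internally stabilizes the closed loop. -/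

import Mathlib

open Matrix Polynomial

set_option synthInstance.maxHeartbeats 1000000
set_option maxHeartbeats 1000000

noncomputable section

/-- The field of real rational functions. -/
abbrev FF : Type := RatFunc ℝ

/-- The rational function `λ` (the image of the polynomial indeterminate `X`). -/
noncomputable def lam : FF := RatFunc.X

/-- Entrywise embedding of a real matrix into matrices over `FF`. -/
noncomputable def mapF {k l : Type} (M : Matrix k l ℝ) : Matrix k l FF :=
  M.map (algebraMap ℝ FF)

/-- The pencil `λ I - M` over `FF`, for a real square matrix `M`. -/
noncomputable def lamI {k : Type} [Fintype k] [DecidableEq k] (M : Matrix k k ℝ) :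
    Matrix k k FF := lam • (1 : Matrix k k FF) - mapF M

/-- Entrywise complexification of a real matrix. -/
def mapC {k l : Type} (M : Matrix k l ℝ) : Matrix k l ℂ :=
  M.map (algebraMap ℝ ℂ)

/-- A real rational function is stable if every complex root of its reduced denominator
has real part `< 0`. -/
def StableF (f : RatFunc ℝ) : Prop :=
  ∀ z : ℂ, ((f.denom).map (algebraMap ℝ ℂ)).IsRoot z → z.re < 0

/-- A real square matrix is Hurwitz if all roots of its characteristic polynomial
have real part `< 0`. -/
def IsHurwitz {k : Type} [Fintype k] [DecidableEq k] (M : Matrix k k ℝ) : Prop :=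
  ∀ z : ℂ, ((M.charpoly).map (algebraMap ℝ ℂ)).IsRoot z → z.re < 0

/-! ### The stable subring -/

abbrev FC : Type := RatFunc ℂ

lemma stable_of_dvd {f : FF} {q : ℝ[X]} (hq : ∀ z : ℂ, (q.map (algebraMap ℝ ℂ)).IsRoot z → z.re < 0)
    (h : f.denom ∣ q) : StableF f := by
  intro z hz
  obtain ⟨c, hc⟩ := h
  exact hq z (by simp [hc, Polynomial.IsRoot, hz.eq_zero])

lemma stable_one_denom {f : FF} (h : f.denom = 1) : StableF f := by
  intro z hz
  simp [h, Polynomial.IsRoot] at hz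

lemma StableF.add {f g : FF} (hf : StableF f) (hg : StableF g) : StableF (f + g) := by
  refine stable_of_dvd ?_ (RatFunc.denom_add_dvd f g)
  intro z hz
  rw [Polynomial.map_mul] at hz
  rcases mul_eq_zero.mp (by simpa [Polynomial.IsRoot] using hz.eq_zero :
      Polynomial.eval z (f.denom.map (algebraMap ℝ ℂ)) *
        Polynomial.eval z (g.denom.map (algebraMap ℝ ℂ)) = 0) with h | h
  · exact hf z h
  · exact hg z h

lemma StableF.mul {f g : FF} (hf : StableF f) (hg : StableF g) : StableF (f * g) := by
  refine stable_of_dvd ?_ (RatFunc.denom_mul_dvd f g)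
  intro z hz
  rw [Polynomial.map_mul] at hz
  rcases mul_eq_zero.mp (by simpa [Polynomial.IsRoot] using hz.eq_zero :
      Polynomial.eval z (f.denom.map (algebraMap ℝ ℂ)) *
        Polynomial.eval z (g.denom.map (algebraMap ℝ ℂ)) = 0) with h | h
  · exact hf z h
  · exact hg z h

lemma stable_algebraMap_poly (q : ℝ[X]) : StableF (algebraMap ℝ[X] FF q) :=
  stable_one_denom (RatFunc.denom_algebraMap q)

lemma stable_zero : StableF (0 : FF) := stable_one_denom RatFunc.denom_zero

lemma stable_one : StableF (1 : FF) := stable_one_denom RatFunc.denom_one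

lemma stable_lam : StableF lam := by
  rw [lam, ← RatFunc.algebraMap_X]; exact stable_algebraMap_poly _

lemma stable_const (c : ℝ) : StableF (algebraMap ℝ FF c) := by
  have : (algebraMap ℝ FF c) = algebraMap ℝ[X] FF (Polynomial.C c) := by
    rw [RatFunc.algebraMap_C]; rfl
  rw [this]; exact stable_algebraMap_poly _

lemma StableF.neg {f : FF} (hf : StableF f) : StableF (-f) := by
  have : -f = algebraMap ℝ FF (-1) * f := by
    simp
  rw [this]; exact (stable_const (-1)).mul hf

lemma StableF.sub {f g : FF} (hf : StableF f) (hg : StableF g) : StableF (f - g) := by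
  rw [sub_eq_add_neg]; exact hf.add hg.neg

lemma stable_sum {ι : Type*} (s : Finset ι) (f : ι → FF) (h : ∀ i ∈ s, StableF (f i)) :
    StableF (∑ i ∈ s, f i) := by
  classical
  induction s using Finset.induction_on with
  | empty => simpa using stable_zero
  | insert a s hni ih =>
      rw [Finset.sum_insert hni]
      exact (h a (by simp)).add (ih fun i hi => h i (by simp [hi]))

/-- Stability of a quotient of polynomials with stable denominator. -/
lemma stable_div_poly {q : ℝ[X]} (p : ℝ[X])
    (hq : ∀ z : ℂ, (q.map (algebraMap ℝ ℂ)).IsRoot z → z.re < 0) :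
    StableF (algebraMap ℝ[X] FF p / algebraMap ℝ[X] FF q) :=
  stable_of_dvd hq (RatFunc.denom_div_dvd p q)

/-! ### Matrix-level stability -/

def MStab {a b : Type} (M : Matrix a b FF) : Prop := ∀ i j, StableF (M i j)

lemma MStab.add {a b : Type} {M N : Matrix a b FF} (hM : MStab M) (hN : MStab N) :
    MStab (M + N) := fun i j => (hM i j).add (hN i j)

lemma MStab.sub {a b : Type} {M N : Matrix a b FF} (hM : MStab M) (hN : MStab N) :
    MStab (M - N) := fun i j => (hM i j).sub (hN i j)

lemma MStab.mul {a b c : Type} [Fintype b] {M : Matrix a b FF} {N : Matrix b c FF}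
    (hM : MStab M) (hN : MStab N) : MStab (M * N) := by
  intro i j
  rw [Matrix.mul_apply]
  exact stable_sum _ _ fun k _ => (hM i k).mul (hN k j)

lemma MStab.smul {a b : Type} {c : FF} {M : Matrix a b FF} (hc : StableF c) (hM : MStab M) :
    MStab (c • M) := fun i j => by
  simpa [Matrix.smul_apply, smul_eq_mul] using hc.mul (hM i j)

lemma MStab.one {a : Type} [DecidableEq a] : MStab (1 : Matrix a a FF) := by
  intro i j
  by_cases h : i = j <;> simp [Matrix.one_apply, h, stable_one, stable_zero]

lemma MStab.mapF {a b : Type} (M : Matrix a b ℝ) : MStab (mapF M) := fun i j =>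
  stable_const _

/-! ### `lamI` inverses -/

/-- The canonical map `ℝ[X] → FF`. -/
noncomputable def phiR : ℝ[X] →+* FF := algebraMap ℝ[X] FF

lemma lamI_eq_charmatrix_map {k : Type} [Fintype k] [DecidableEq k] (M : Matrix k k ℝ) :
    lamI M = (charmatrix M).map phiR := by
  ext i j
  by_cases h : i = j
  · subst h
    simp [lamI, Matrix.sub_apply, Matrix.smul_apply, Matrix.one_apply, charmatrix_apply_eq,
      phiR, mapF, lam, RatFunc.algebraMap_X, RatFunc.algebraMap_C, smul_eq_mul]
  · simp [lamI, Matrix.sub_apply, Matrix.smul_apply, Matrix.one_apply, h,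
      charmatrix_apply_ne _ _ _ h, phiR, mapF, RatFunc.algebraMap_C, smul_eq_mul]

lemma det_lamI {k : Type} [Fintype k] [DecidableEq k] (M : Matrix k k ℝ) :
    (lamI M).det = phiR M.charpoly := by
  rw [lamI_eq_charmatrix_map]
  exact (RingHom.map_det phiR (charmatrix M)).symm

lemma det_lamI_ne_zero {k : Type} [Fintype k] [DecidableEq k] (M : Matrix k k ℝ) :
    (lamI M).det ≠ 0 := by
  rw [det_lamI]
  intro h
  have := RatFunc.algebraMap_injective ℝ
  have h0 : M.charpoly = 0 := by
    apply this
    simpa [phiR] using h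
  exact (Matrix.charpoly_monic M).ne_zero h0

lemma isUnit_det_lamI {k : Type} [Fintype k] [DecidableEq k] (M : Matrix k k ℝ) :
    IsUnit (lamI M).det := isUnit_iff_ne_zero.mpr (det_lamI_ne_zero M)

lemma lamI_inv_entry {k : Type} [Fintype k] [DecidableEq k] (M : Matrix k k ℝ) (i j : k) :
    (lamI M)⁻¹ i j = phiR ((charmatrix M).adjugate i j) / phiR M.charpoly := by
  rw [Matrix.inv_def, det_lamI, lamI_eq_charmatrix_map]
  have hadj : ((charmatrix M).map phiR).adjugate = ((charmatrix M).adjugate).map phiR := by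
    have := RingHom.map_adjugate phiR (charmatrix M)
    simpa [RingHom.mapMatrix_apply] using this.symm
  rw [hadj]
  simp [Matrix.smul_apply, Matrix.map_apply, Ring.inverse_eq_inv', div_eq_inv_mul, smul_eq_mul]

lemma MStab_lamI_inv {k : Type} [Fintype k] [DecidableEq k] {M : Matrix k k ℝ}
    (hM : IsHurwitz M) : MStab (lamI M)⁻¹ := by
  intro i j
  rw [lamI_inv_entry]
  exact stable_div_poly _ hM

/-! ### Complexification -/

noncomputable def phiC : ℂ[X] →+* FC := algebraMap ℂ[X] FC

noncomputable def cpoly : ℝ[X] →+* ℂ[X] := Polynomial.mapRingHom (algebraMap ℝ ℂ)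

lemma psi_aux : nonZeroDivisors ℝ[X] ≤ Submonoid.comap (phiC.comp cpoly) (nonZeroDivisors FC) := by
  intro q hq
  simp only [Submonoid.mem_comap, RingHom.coe_comp, Function.comp_apply]
  rw [mem_nonZeroDivisors_iff_ne_zero]
  have hq0 : q ≠ 0 := nonZeroDivisors.ne_zero hq
  have h1 : cpoly q ≠ 0 := by
    simp only [cpoly, Polynomial.coe_mapRingHom]
    exact (Polynomial.map_ne_zero_iff (algebraMap ℝ ℂ).injective).mpr hq0
  simp only [phiC]
  intro h
  exact h1 (RatFunc.algebraMap_injective ℂ (by simpa using h))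

/-- Complexification of a real rational function. -/
noncomputable def psiF : FF →+* FC := RatFunc.liftRingHom (phiC.comp cpoly) psi_aux

lemma psiF_algebraMap (q : ℝ[X]) :
    psiF (algebraMap ℝ[X] FF q) = algebraMap ℂ[X] FC (q.map (algebraMap ℝ ℂ)) := by
  have := RatFunc.liftRingHom_apply_div (phiC.comp cpoly) psi_aux q 1
  simpa [psiF, phiC, cpoly] using this

lemma psiF_lam : psiF lam = RatFunc.X := by
  rw [lam, ← RatFunc.algebraMap_X, psiF_algebraMap]
  simp [RatFunc.algebraMap_X]

lemma psiF_const (c : ℝ) : psiF (algebraMap ℝ FF c) = algebraMap ℂ FC (algebraMap ℝ ℂ c) := by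
  have h1 : (algebraMap ℝ FF c) = algebraMap ℝ[X] FF (Polynomial.C c) := by
    rw [RatFunc.algebraMap_C]; rfl
  have h2 : (algebraMap ℂ FC (algebraMap ℝ ℂ c)) =
      algebraMap ℂ[X] FC (Polynomial.C (algebraMap ℝ ℂ c)) := by
    rw [RatFunc.algebraMap_C]; rfl
  rw [h1, h2, psiF_algebraMap]
  simp

lemma psiF_eq_div (f : FF) :
    psiF f = algebraMap ℂ[X] FC (f.num.map (algebraMap ℝ ℂ)) /
      algebraMap ℂ[X] FC (f.denom.map (algebraMap ℝ ℂ)) := by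
  conv_lhs => rw [← RatFunc.num_div_denom f]
  rw [map_div₀, psiF_algebraMap, psiF_algebraMap]

/-! ### poles over ℂ -/

def nopole (μ : ℂ) (g : FC) : Prop := Polynomial.eval μ g.denom ≠ 0

noncomputable def evv (μ : ℂ) (g : FC) : ℂ := RatFunc.eval (RingHom.id ℂ) μ g

lemma eval₂_id (p : ℂ[X]) (x : ℂ) : Polynomial.eval₂ (RingHom.id ℂ) x p = p.eval x := rfl

lemma nopole_of_dvd {μ : ℂ} {g : FC} {q : ℂ[X]} (hq : q.eval μ ≠ 0) (h : g.denom ∣ q) :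
    nopole μ g := by
  obtain ⟨c, hc⟩ := h
  intro h0
  rw [hc, Polynomial.eval_mul, h0, zero_mul] at hq
  exact hq rfl

lemma nopole_algebraMap (μ : ℂ) (q : ℂ[X]) : nopole μ (algebraMap ℂ[X] FC q) := by
  unfold nopole
  rw [RatFunc.denom_algebraMap]
  simp

lemma evv_algebraMap (μ : ℂ) (q : ℂ[X]) : evv μ (algebraMap ℂ[X] FC q) = q.eval μ := by
  unfold evv
  rw [RatFunc.eval_algebraMap]
  simp [eval₂_id]

lemma nopole_zero (μ : ℂ) : nopole μ (0 : FC) := by simpa using nopole_algebraMap μ 0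
lemma nopole_one (μ : ℂ) : nopole μ (1 : FC) := by simpa using nopole_algebraMap μ 1
lemma evv_zero (μ : ℂ) : evv μ (0 : FC) = 0 := by simpa using evv_algebraMap μ 0
lemma evv_one (μ : ℂ) : evv μ (1 : FC) = 1 := by simpa using evv_algebraMap μ 1

lemma nopole.add {μ : ℂ} {f g : FC} (hf : nopole μ f) (hg : nopole μ g) : nopole μ (f + g) :=
  nopole_of_dvd (by simp [Polynomial.eval_mul]; tauto) (RatFunc.denom_add_dvd f g)

lemma nopole.mul {μ : ℂ} {f g : FC} (hf : nopole μ f) (hg : nopole μ g) : nopole μ (f * g) :=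
  nopole_of_dvd (by simp [Polynomial.eval_mul]; tauto) (RatFunc.denom_mul_dvd f g)

lemma evv_add {μ : ℂ} {f g : FC} (hf : nopole μ f) (hg : nopole μ g) :
    evv μ (f + g) = evv μ f + evv μ g :=
  RatFunc.eval_add _ _ (by simpa [_root_.eval₂_id, nopole] using hf) (by simpa [_root_.eval₂_id, nopole] using hg)

lemma evv_mul {μ : ℂ} {f g : FC} (hf : nopole μ f) (hg : nopole μ g) :
    evv μ (f * g) = evv μ f * evv μ g :=
  RatFunc.eval_mul _ _ (by simpa [_root_.eval₂_id, nopole] using hf) (by simpa [_root_.eval₂_id, nopole] using hg)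

lemma nopole.neg {μ : ℂ} {f : FC} (hf : nopole μ f) : nopole μ (-f) := by
  have : -f = algebraMap ℂ[X] FC (-1) * f := by simp
  rw [this]; exact (nopole_algebraMap μ (-1)).mul hf

lemma evv_neg {μ : ℂ} {f : FC} (hf : nopole μ f) : evv μ (-f) = -evv μ f := by
  have : -f = algebraMap ℂ[X] FC (-1) * f := by simp
  rw [this, evv_mul (nopole_algebraMap μ (-1)) hf, evv_algebraMap]
  simp

lemma nopole.sub {μ : ℂ} {f g : FC} (hf : nopole μ f) (hg : nopole μ g) : nopole μ (f - g) := by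
  rw [sub_eq_add_neg]; exact hf.add hg.neg

lemma evv_sub {μ : ℂ} {f g : FC} (hf : nopole μ f) (hg : nopole μ g) :
    evv μ (f - g) = evv μ f - evv μ g := by
  rw [sub_eq_add_neg, evv_add hf hg.neg, evv_neg hg, sub_eq_add_neg]

lemma nopole_sum {μ : ℂ} {ι : Type*} (s : Finset ι) (f : ι → FC)
    (h : ∀ i ∈ s, nopole μ (f i)) :
    nopole μ (∑ i ∈ s, f i) ∧ evv μ (∑ i ∈ s, f i) = ∑ i ∈ s, evv μ (f i) := by
  classical
  induction s using Finset.induction_on with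
  | empty => simp [nopole_zero, evv_zero]
  | insert a s hni ih =>
      have h1 := h a (by simp)
      have h2 := ih fun i hi => h i (by simp [hi])
      rw [Finset.sum_insert hni, Finset.sum_insert hni]
      exact ⟨h1.add h2.1, by rw [evv_add h1 h2.1, h2.2]⟩

/-! ### Stability vs. poles -/

lemma nopole_psiF_of_stable {f : FF} (hf : StableF f) {μ : ℂ} (hμ : 0 ≤ μ.re) :
    nopole μ (psiF f) := by
  have hdvd : (psiF f).denom ∣ f.denom.map (algebraMap ℝ ℂ) := by
    have := RatFunc.denom_div_dvd (f.num.map (algebraMap ℝ ℂ)) (f.denom.map (algebraMap ℝ ℂ))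
    rwa [← psiF_eq_div f] at this
  refine nopole_of_dvd ?_ hdvd
  intro h0
  have : (f.denom.map (algebraMap ℝ ℂ)).IsRoot μ := h0
  linarith [hf μ this]

lemma stable_of_nopole {f : FF} (h : ∀ μ : ℂ, 0 ≤ μ.re → nopole μ (psiF f)) : StableF f := by
  intro z hz
  by_contra hlt
  push_neg at hlt
  have hnp := h z hlt
  -- cross-multiplied identity
  have hdenC : (f.denom.map (algebraMap ℝ ℂ)) ≠ 0 :=
    (Polynomial.map_ne_zero_iff (algebraMap ℝ ℂ).injective).mpr f.denom_ne_zero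
  have hcross : (psiF f).num * (f.denom.map (algebraMap ℝ ℂ)) =
      (f.num.map (algebraMap ℝ ℂ)) * (psiF f).denom := by
    apply RatFunc.algebraMap_injective ℂ
    rw [_root_.map_mul, _root_.map_mul]
    have h2 := psiF_eq_div f
    have hd1 : algebraMap ℂ[X] FC (psiF f).denom ≠ 0 := by
      intro h0
      exact (psiF f).denom_ne_zero (RatFunc.algebraMap_injective ℂ (by simpa using h0))
    have hd2 : algebraMap ℂ[X] FC (f.denom.map (algebraMap ℝ ℂ)) ≠ 0 := by
      intro h0
      exact hdenC (RatFunc.algebraMap_injective ℂ (by simpa using h0))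
    have h3 : algebraMap ℂ[X] FC (psiF f).num = psiF f * algebraMap ℂ[X] FC (psiF f).denom :=
      (div_eq_iff hd1).mp (RatFunc.num_div_denom (psiF f))
    have h4 : algebraMap ℂ[X] FC (f.num.map (algebraMap ℝ ℂ)) =
        psiF f * algebraMap ℂ[X] FC (f.denom.map (algebraMap ℝ ℂ)) :=
      (div_eq_iff hd2).mp h2.symm
    rw [h3, h4]
    ring
  have hnum0 : (f.num.map (algebraMap ℝ ℂ)).eval z = 0 := by
    have := congrArg (Polynomial.eval z) hcross
    rw [Polynomial.eval_mul, Polynomial.eval_mul, hz.eq_zero, mul_zero] at this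
    rcases mul_eq_zero.mp this.symm with h | h
    · exact h
    · exact absurd h hnp
  -- coprimality contradiction
  have hcop : IsCoprime (f.num.map (algebraMap ℝ ℂ)) (f.denom.map (algebraMap ℝ ℂ)) := by
    have := (RatFunc.isCoprime_num_denom f).map (Polynomial.mapRingHom (algebraMap ℝ ℂ))
    simpa using this
  obtain ⟨a, b, hab⟩ := hcop
  have := congrArg (Polynomial.eval z) hab
  rw [Polynomial.eval_add, Polynomial.eval_mul, Polynomial.eval_mul, hnum0, hz.eq_zero] at this
  simp at this

/-! ### Pole clearing -/

lemma algebraMapC_ne_zero {q : ℂ[X]} (hq : q ≠ 0) : algebraMap ℂ[X] FC q ≠ 0 := by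
  intro h0
  exact hq (RatFunc.algebraMap_injective ℂ (by rw [h0, map_zero]))

lemma denom_factor (μ : ℂ) (g : FC) :
    ∃ d0 : ℂ[X], g.denom = (Polynomial.X - Polynomial.C μ) ^ (rootMultiplicity μ g.denom) * d0 ∧
      d0.eval μ ≠ 0 := by
  set t := rootMultiplicity μ g.denom with ht
  obtain ⟨d0, hd0⟩ : (Polynomial.X - Polynomial.C μ) ^ t ∣ g.denom :=
    Polynomial.pow_rootMultiplicity_dvd g.denom μ
  refine ⟨d0, hd0, ?_⟩
  intro h0
  obtain ⟨c, hc⟩ : (Polynomial.X - Polynomial.C μ) ∣ d0 := Polynomial.dvd_iff_isRoot.mpr h0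
  have hdd : (Polynomial.X - Polynomial.C μ) ^ (t + 1) ∣ g.denom := by
    refine ⟨c, ?_⟩
    conv_lhs => rw [hd0]
    rw [hc, pow_succ]
    ring
  rw [ht] at hdd
  exact (Polynomial.pow_rootMultiplicity_not_dvd g.denom_ne_zero μ) hdd

/-- Scaling by `(X - μ)^k` kills the pole at `μ` provided `k` exceeds the multiplicity. -/
lemma loc1 {μ : ℂ} (g : FC) {k : ℕ} (hk : rootMultiplicity μ g.denom ≤ k) :
    nopole μ (algebraMap ℂ[X] FC ((Polynomial.X - Polynomial.C μ) ^ k) * g) := by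
  obtain ⟨d0, hfac, hd0⟩ := denom_factor μ g
  set t := rootMultiplicity μ g.denom with ht
  have hgd : g = algebraMap ℂ[X] FC g.num / algebraMap ℂ[X] FC g.denom :=
    (RatFunc.num_div_denom g).symm
  have hXC : (algebraMap ℂ[X] FC ((Polynomial.X - Polynomial.C μ) ^ t)) ≠ 0 :=
    algebraMapC_ne_zero (pow_ne_zero t (Polynomial.X_sub_C_ne_zero μ))
  have hd0ne : (algebraMap ℂ[X] FC d0) ≠ 0 :=
    algebraMapC_ne_zero (fun h0 => hd0 (by rw [h0]; simp))
  have hsplit : (Polynomial.X - Polynomial.C μ) ^ k =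
      (Polynomial.X - Polynomial.C μ) ^ (k - t) * (Polynomial.X - Polynomial.C μ) ^ t := by
    rw [← pow_add, Nat.sub_add_cancel hk]
  have hg' : g = algebraMap ℂ[X] FC g.num /
      (algebraMap ℂ[X] FC ((Polynomial.X - Polynomial.C μ) ^ t) * algebraMap ℂ[X] FC d0) := by
    conv_lhs => rw [← RatFunc.num_div_denom g]
    rw [show g.denom = (Polynomial.X - Polynomial.C μ) ^ t * d0 from hfac, _root_.map_mul]
  have key : algebraMap ℂ[X] FC ((Polynomial.X - Polynomial.C μ) ^ k) * g =
      algebraMap ℂ[X] FC ((Polynomial.X - Polynomial.C μ) ^ (k - t) * g.num) /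
        algebraMap ℂ[X] FC d0 := by
    have hZ : (RatFunc.X : FC) - RatFunc.C μ ≠ 0 := by
      intro h0
      apply algebraMapC_ne_zero (Polynomial.X_sub_C_ne_zero μ)
      rw [map_sub, RatFunc.algebraMap_X, RatFunc.algebraMap_C, h0]
    conv_lhs => rw [hg']
    rw [hsplit, _root_.map_mul, _root_.map_mul]
    field_simp
  rw [key]
  refine nopole_of_dvd hd0 (RatFunc.denom_div_dvd _ _)

/-- If `k` equals the (positive) multiplicity, the scaled function has nonzero value. -/
lemma loc2 {μ : ℂ} (g : FC) (hpos : 1 ≤ rootMultiplicity μ g.denom) :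
    evv μ (algebraMap ℂ[X] FC ((Polynomial.X - Polynomial.C μ) ^ (rootMultiplicity μ g.denom))
      * g) ≠ 0 := by
  obtain ⟨d0, hfac, hd0⟩ := denom_factor μ g
  set t := rootMultiplicity μ g.denom with ht
  set h := algebraMap ℂ[X] FC ((Polynomial.X - Polynomial.C μ) ^ t) * g with hh
  have hnum : g.num.eval μ ≠ 0 := by
    intro h0
    obtain ⟨a, b, hab⟩ := RatFunc.isCoprime_num_denom g
    have hden0 : g.denom.eval μ = 0 := by
      rw [hfac, Polynomial.eval_mul, Polynomial.eval_pow]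
      have : (Polynomial.X - Polynomial.C μ).eval μ = 0 := by simp
      rw [this, zero_pow (by omega), zero_mul]
    have := congrArg (Polynomial.eval μ) hab
    rw [Polynomial.eval_add, Polynomial.eval_mul, Polynomial.eval_mul, h0, hden0] at this
    simp at this
  have hd0ne : (algebraMap ℂ[X] FC d0) ≠ 0 :=
    algebraMapC_ne_zero (fun h0 => hd0 (by rw [h0]; simp))
  have hXC : (algebraMap ℂ[X] FC ((Polynomial.X - Polynomial.C μ) ^ t)) ≠ 0 :=
    algebraMapC_ne_zero (pow_ne_zero t (Polynomial.X_sub_C_ne_zero μ))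
  have hg' : g = algebraMap ℂ[X] FC g.num /
      (algebraMap ℂ[X] FC ((Polynomial.X - Polynomial.C μ) ^ t) * algebraMap ℂ[X] FC d0) := by
    conv_lhs => rw [← RatFunc.num_div_denom g]
    rw [show g.denom = (Polynomial.X - Polynomial.C μ) ^ t * d0 from hfac, _root_.map_mul]
  have hZ : (RatFunc.X : FC) - RatFunc.C μ ≠ 0 := by
    intro h0
    apply algebraMapC_ne_zero (Polynomial.X_sub_C_ne_zero μ)
    rw [map_sub, RatFunc.algebraMap_X, RatFunc.algebraMap_C, h0]
  have key : h * algebraMap ℂ[X] FC d0 = algebraMap ℂ[X] FC g.num := by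
    rw [hh]
    conv_lhs => rw [hg']
    field_simp
  have hnph : nopole μ h := loc1 g le_rfl
  have := evv_mul hnph (nopole_algebraMap μ d0)
  rw [key, evv_algebraMap, evv_algebraMap] at this
  intro h0
  rw [h0, zero_mul] at this
  first
  | exact hnum this
  | exact hnum this.symm

lemma nopole_of_rootMultiplicity_zero {μ : ℂ} {g : FC}
    (h : rootMultiplicity μ g.denom = 0) : nopole μ g := by
  have := (Polynomial.rootMultiplicity_eq_zero_iff).mp h
  intro h0
  exact g.denom_ne_zero (this h0)

/-! ### Matrix-level poles and evaluation -/

def Nop {a b : Type} (μ : ℂ) (M : Matrix a b FC) : Prop := ∀ i j, nopole μ (M i j)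

noncomputable def EV {a b : Type} (μ : ℂ) (M : Matrix a b FC) : Matrix a b ℂ :=
  Matrix.of fun i j => evv μ (M i j)

lemma Nop.add {a b : Type} {μ : ℂ} {M N : Matrix a b FC} (hM : Nop μ M) (hN : Nop μ N) :
    Nop μ (M + N) := fun i j => (hM i j).add (hN i j)

lemma EV_add {a b : Type} {μ : ℂ} {M N : Matrix a b FC} (hM : Nop μ M) (hN : Nop μ N) :
    EV μ (M + N) = EV μ M + EV μ N := by
  ext i j; exact evv_add (hM i j) (hN i j)

lemma Nop.sub {a b : Type} {μ : ℂ} {M N : Matrix a b FC} (hM : Nop μ M) (hN : Nop μ N) :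
    Nop μ (M - N) := fun i j => (hM i j).sub (hN i j)

lemma EV_sub {a b : Type} {μ : ℂ} {M N : Matrix a b FC} (hM : Nop μ M) (hN : Nop μ N) :
    EV μ (M - N) = EV μ M - EV μ N := by
  ext i j; exact evv_sub (hM i j) (hN i j)

lemma Nop.mul {a b c : Type} [Fintype b] {μ : ℂ} {M : Matrix a b FC} {N : Matrix b c FC}
    (hM : Nop μ M) (hN : Nop μ N) : Nop μ (M * N) := by
  intro i j
  rw [Matrix.mul_apply]
  exact (nopole_sum _ _ fun k _ => (hM i k).mul (hN k j)).1

lemma EV_mul {a b c : Type} [Fintype b] {μ : ℂ} {M : Matrix a b FC} {N : Matrix b c FC}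
    (hM : Nop μ M) (hN : Nop μ N) : EV μ (M * N) = EV μ M * EV μ N := by
  ext i j
  rw [Matrix.mul_apply]
  have := (nopole_sum (Finset.univ) (fun k => M i k * N k j)
    (fun k _ => (hM i k).mul (hN k j))).2
  rw [EV, Matrix.of_apply, Matrix.mul_apply] at *
  rw [this]
  exact Finset.sum_congr rfl fun k _ => evv_mul (hM i k) (hN k j)

lemma Nop.smul {a b : Type} {μ : ℂ} {c : FC} {M : Matrix a b FC} (hc : nopole μ c)
    (hM : Nop μ M) : Nop μ (c • M) := fun i j => by
  simpa [Matrix.smul_apply, smul_eq_mul] using hc.mul (hM i j)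

lemma EV_smul {a b : Type} {μ : ℂ} {c : FC} {M : Matrix a b FC} (hc : nopole μ c)
    (hM : Nop μ M) : EV μ (c • M) = evv μ c • EV μ M := by
  ext i j
  simpa [EV, Matrix.smul_apply, smul_eq_mul] using evv_mul hc (hM i j)

lemma Nop.one {a : Type} [DecidableEq a] (μ : ℂ) : Nop μ (1 : Matrix a a FC) := by
  intro i j
  by_cases h : i = j <;> simp [Matrix.one_apply, h, nopole_one, nopole_zero]

lemma EV_one {a : Type} [DecidableEq a] (μ : ℂ) : EV μ (1 : Matrix a a FC) = 1 := by
  ext i j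
  by_cases h : i = j <;> simp [EV, Matrix.one_apply, h, evv_one, evv_zero]

lemma Nop.mapPsi_mapF {a b : Type} (μ : ℂ) (M : Matrix a b ℝ) :
    Nop μ ((mapF M).map psiF) := by
  intro i j
  simp only [Matrix.map_apply, mapF, psiF_const]
  have : (algebraMap ℂ FC (algebraMap ℝ ℂ (M i j))) =
      algebraMap ℂ[X] FC (Polynomial.C (algebraMap ℝ ℂ (M i j))) := by
    rw [RatFunc.algebraMap_C]; rfl
  rw [this]
  exact nopole_algebraMap _ _

lemma EV_mapPsi_mapF {a b : Type} (μ : ℂ) (M : Matrix a b ℝ) :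
    EV μ ((mapF M).map psiF) = mapC M := by
  ext i j
  simp only [EV, Matrix.of_apply, Matrix.map_apply, mapF, mapC, psiF_const]
  have : (algebraMap ℂ FC (algebraMap ℝ ℂ (M i j))) =
      algebraMap ℂ[X] FC (Polynomial.C (algebraMap ℝ ℂ (M i j))) := by
    rw [RatFunc.algebraMap_C]; rfl
  rw [this, evv_algebraMap]
  simp

/-! ### Complex linear algebra -/

lemma exists_right_inverse_of_rank {n l : Type} [Fintype n] [Fintype l] [DecidableEq n]
    (M : Matrix n l ℂ) (h : M.rank = Fintype.card n) : ∃ R : Matrix l n ℂ, M * R = 1 := by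
  have hsurj : Function.Surjective M.mulVecLin := by
    rw [← LinearMap.range_eq_top]
    apply Submodule.eq_top_of_finrank_eq
    rw [Module.finrank_fintype_fun_eq_card]
    exact h
  have hx : ∀ j : n, ∃ x : l → ℂ, M.mulVec x = Pi.single j 1 := fun j => hsurj _
  choose x hxs using hx
  refine ⟨Matrix.of fun i j => x j i, ?_⟩
  ext i j
  rw [Matrix.mul_apply, Matrix.one_apply]
  have := congrFun (hxs j) i
  rw [Matrix.mulVec, dotProduct] at this
  simp only [Matrix.of_apply]
  rw [this]
  by_cases h' : i = j
  · subst h'; simp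
  · simp [Pi.single_apply, h', eq_comm]
  
lemma det_smul_one_sub_ne_zero_of_hurwitz {k : Type} [Fintype k] [DecidableEq k]
    {M : Matrix k k ℝ} (hM : IsHurwitz M) {μ : ℂ} (hμ : 0 ≤ μ.re) :
    (μ • (1 : Matrix k k ℂ) - mapC M).det ≠ 0 := by
  have h1 : (μ • (1 : Matrix k k ℂ) - mapC M) = (charmatrix (mapC M)).map (Polynomial.evalRingHom μ) := by
    ext i j
    by_cases h : i = j
    · subst h
      simp [charmatrix_apply_eq, Matrix.sub_apply, Matrix.smul_apply, Matrix.one_apply]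
    · simp [charmatrix_apply_ne _ _ _ h, Matrix.sub_apply, Matrix.smul_apply, Matrix.one_apply, h]
  have h2 : (μ • (1 : Matrix k k ℂ) - mapC M).det =
      ((mapC M).charpoly).eval μ := by
    rw [h1, Matrix.charpoly]
    rw [show ((mapC M).charmatrix.map ⇑(Polynomial.evalRingHom μ)) =
      (Polynomial.evalRingHom μ).mapMatrix (mapC M).charmatrix from rfl, ← RingHom.map_det]
    rfl
  rw [h2]
  have h3 : (mapC M).charpoly = (M.charpoly).map (algebraMap ℝ ℂ) := by
    rw [mapC, Matrix.charpoly_map]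
  rw [h3]
  intro h0
  have : ((M.charpoly).map (algebraMap ℝ ℂ)).IsRoot μ := h0
  linarith [hM μ this]

lemma mapC_mul {a b c : Type} [Fintype b] (M : Matrix a b ℝ) (N : Matrix b c ℝ) :
    mapC (M * N) = mapC M * mapC N := by
  unfold mapC
  exact Matrix.map_mul (f := algebraMap ℝ ℂ)

lemma mapC_add {a b : Type} (M N : Matrix a b ℝ) : mapC (M + N) = mapC M + mapC N := by
  unfold mapC; ext i j; simp

lemma mapC_one {a : Type} [Fintype a] [DecidableEq a] : mapC (1 : Matrix a a ℝ) = 1 := by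
  unfold mapC; ext i j
  by_cases h : i = j <;> simp [Matrix.one_apply, h]

/-- `A_K := K A11 - K A12 K + A21 - A22 K`. -/
noncomputable def AKmat {p r : ℕ} (A11 : Matrix (Fin p) (Fin p) ℝ)
    (A12 : Matrix (Fin p) (Fin r) ℝ) (A21 : Matrix (Fin r) (Fin p) ℝ)
    (A22 : Matrix (Fin r) (Fin r) ℝ) (K : Matrix (Fin r) (Fin p) ℝ) :
    Matrix (Fin r) (Fin p) ℝ :=
  K * A11 - K * A12 * K + A21 - A22 * K

/-- The `W` member of the SRTR pair obtained from `K`. -/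
noncomputable def srtrW {p r : ℕ} (A11 : Matrix (Fin p) (Fin p) ℝ)
    (A12 : Matrix (Fin p) (Fin r) ℝ) (A21 : Matrix (Fin r) (Fin p) ℝ)
    (A22 : Matrix (Fin r) (Fin r) ℝ) (K : Matrix (Fin r) (Fin p) ℝ) :
    Matrix (Fin p) (Fin p) FF :=
  mapF (A11 - A12 * K) +
    mapF A12 * (lamI (A22 + K * A12))⁻¹ * mapF (AKmat A11 A12 A21 A22 K)

/-- The `V` member of the SRTR pair obtained from `K`. -/
noncomputable def srtrV {p r m : ℕ} (A12 : Matrix (Fin p) (Fin r) ℝ)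
    (A22 : Matrix (Fin r) (Fin r) ℝ) (B1 : Matrix (Fin p) (Fin m) ℝ)
    (B2 : Matrix (Fin r) (Fin m) ℝ) (K : Matrix (Fin r) (Fin p) ℝ) :
    Matrix (Fin p) (Fin m) FF :=
  mapF B1 + mapF A12 * (lamI (A22 + K * A12))⁻¹ * mapF (K * B1 + B2)

/-- The plant transfer function `G = [I_p 0] (λ I_n - A)⁻¹ B`. -/
noncomputable def plantG {p r m : ℕ} (A11 : Matrix (Fin p) (Fin p) ℝ)
    (A12 : Matrix (Fin p) (Fin r) ℝ) (A21 : Matrix (Fin r) (Fin p) ℝ)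
    (A22 : Matrix (Fin r) (Fin r) ℝ) (B1 : Matrix (Fin p) (Fin m) ℝ)
    (B2 : Matrix (Fin r) (Fin m) ℝ) : Matrix (Fin p) (Fin m) FF :=
  fromCols (1 : Matrix (Fin p) (Fin p) FF) (0 : Matrix (Fin p) (Fin r) FF) *
    (lamI (fromBlocks A11 A12 A21 A22))⁻¹ * mapF (fromRows B1 B2)

/-- `(A12, A22)` is observable: `[A22 - μ I ; A12]` has full column rank for all `μ : ℂ`. -/
def ObsPair {p r : ℕ} (A12 : Matrix (Fin p) (Fin r) ℝ)
    (A22 : Matrix (Fin r) (Fin r) ℝ) : Prop :=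
  ∀ μ : ℂ, (fromRows (mapC A22 - μ • (1 : Matrix (Fin r) (Fin r) ℂ)) (mapC A12)).rank = r

/-- `(A, B)` is controllable: `[A - μ I, B]` has full row rank for all `μ : ℂ`. -/
def CtrbPair {p r m : ℕ} (A : Matrix (Fin p ⊕ Fin r) (Fin p ⊕ Fin r) ℝ)
    (B : Matrix (Fin p ⊕ Fin r) (Fin m) ℝ) : Prop :=
  ∀ μ : ℂ, (fromCols (mapC A - μ • (1 : Matrix (Fin p ⊕ Fin r) (Fin p ⊕ Fin r) ℂ))
    (mapC B)).rank = p + r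

/-! ### The PBH-style kill lemma -/

section Kill

variable {p r m s : ℕ}
variable (A11 : Matrix (Fin p) (Fin p) ℝ) (A12 : Matrix (Fin p) (Fin r) ℝ)
  (A21 : Matrix (Fin r) (Fin p) ℝ) (A22 : Matrix (Fin r) (Fin r) ℝ)
  (B1 : Matrix (Fin p) (Fin m) ℝ) (B2 : Matrix (Fin r) (Fin m) ℝ)
  (K : Matrix (Fin r) (Fin p) ℝ) (μ : ℂ)

noncomputable def Fhat : Matrix (Fin r) (Fin r) ℂ := μ • 1 - mapC (A22 + K * A12)

noncomputable def What : Matrix (Fin p) (Fin p) ℂ :=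
  mapC (A11 - A12 * K) + mapC A12 * (Fhat A12 A22 K μ)⁻¹ * mapC (AKmat A11 A12 A21 A22 K)

noncomputable def Vhat : Matrix (Fin p) (Fin m) ℂ :=
  mapC B1 + mapC A12 * (Fhat A12 A22 K μ)⁻¹ * mapC (K * B1 + B2)

lemma fromColumns_zero' {a b c : Type} (M : Matrix a (b ⊕ c) ℂ)
    (h1 : ∀ i j, M i (Sum.inl j) = 0) (h2 : ∀ i j, M i (Sum.inr j) = 0) : M = 0 := by
  ext i j
  rcases j with j | j
  · simpa using h1 i j
  · simpa using h2 i j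

lemma kill_lemma (hK : IsHurwitz (A22 + K * A12))
    (hctrb : CtrbPair (fromBlocks A11 A12 A21 A22) (fromRows B1 B2))
    (hμ : 0 ≤ μ.re) (y : Matrix (Fin s) (Fin p) ℂ)
    (h1 : y * (μ • 1 - What A11 A12 A21 A22 K μ) = 0)
    (h2 : y * Vhat A12 A22 B1 B2 K μ = 0) : y = 0 := by
  set FH := Fhat A12 A22 K μ with hFH
  have hFdet : FH.det ≠ 0 := det_smul_one_sub_ne_zero_of_hurwitz hK hμ
  have hFunit : IsUnit FH.det := isUnit_iff_ne_zero.mpr hFdet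
  have hFinv : FH⁻¹ * FH = 1 := Matrix.nonsing_inv_mul FH hFunit
  -- real similarity data
  set At : Matrix (Fin p ⊕ Fin r) (Fin p ⊕ Fin r) ℝ :=
    fromBlocks (A11 - A12 * K) A12 (AKmat A11 A12 A21 A22 K) (A22 + K * A12) with hAt
  set Tm : Matrix (Fin p ⊕ Fin r) (Fin p ⊕ Fin r) ℝ := fromBlocks 1 0 K 1 with hTm
  set A0 : Matrix (Fin p ⊕ Fin r) (Fin p ⊕ Fin r) ℝ := fromBlocks A11 A12 A21 A22 with hA0
  have hTmA : Tm * A0 = At * Tm := by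
    rw [hTm, hA0, hAt, Matrix.fromBlocks_multiply, Matrix.fromBlocks_multiply]
    have e11 : (1 : Matrix (Fin p) (Fin p) ℝ) * A11 + (0 : Matrix (Fin p) (Fin r) ℝ) * A21 =
        (A11 - A12 * K) * (1 : Matrix (Fin p) (Fin p) ℝ) + A12 * K := by
      simp [Matrix.sub_mul]
    have e12 : (1 : Matrix (Fin p) (Fin p) ℝ) * A12 + (0 : Matrix (Fin p) (Fin r) ℝ) * A22 =
        (A11 - A12 * K) * (0 : Matrix (Fin p) (Fin r) ℝ) + A12 * (1 : Matrix (Fin r) (Fin r) ℝ) := by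
      simp
    have e21 : K * A11 + (1 : Matrix (Fin r) (Fin r) ℝ) * A21 =
        AKmat A11 A12 A21 A22 K * (1 : Matrix (Fin p) (Fin p) ℝ) + (A22 + K * A12) * K := by
      simp only [AKmat, Matrix.sub_mul, Matrix.add_mul, Matrix.mul_one, Matrix.one_mul]
      abel
    have e22 : K * A12 + (1 : Matrix (Fin r) (Fin r) ℝ) * A22 =
        AKmat A11 A12 A21 A22 K * (0 : Matrix (Fin p) (Fin r) ℝ) +
          (A22 + K * A12) * (1 : Matrix (Fin r) (Fin r) ℝ) := by
      simp only [Matrix.add_mul, Matrix.mul_zero, Matrix.mul_one, Matrix.one_mul, zero_add]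
      abel
    rw [e11, e12, e21, e22]
  have hTmB : Tm * (fromRows B1 B2) = fromRows B1 (K * B1 + B2) := by
    rw [hTm, Matrix.fromBlocks_mul_fromRows]
    simp
  have hTmInv : Tm * fromBlocks 1 0 (-K) 1 = 1 := by
    rw [hTm, Matrix.fromBlocks_multiply]
    simp [Matrix.fromBlocks_one]
  -- right inverse from controllability
  obtain ⟨Rfull, hRfull⟩ : ∃ R : Matrix ((Fin p ⊕ Fin r) ⊕ Fin m) (Fin p ⊕ Fin r) ℂ,
      (fromCols (mapC A0 - μ • 1) (mapC (fromRows B1 B2))) * R = 1 := by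
    apply exists_right_inverse_of_rank
    rw [hctrb μ]
    simp [Fintype.card_sum]
  -- the extended row vector
  set J : Matrix (Fin s) (Fin r) ℂ := y * (mapC A12 * FH⁻¹) with hJ
  set z : Matrix (Fin s) (Fin p ⊕ Fin r) ℂ := fromCols y J with hz
  have hAtblocks : mapC At - μ • 1 =
      fromBlocks (mapC (A11 - A12 * K) - μ • 1) (mapC A12)
        (mapC (AKmat A11 A12 A21 A22 K)) (-FH) := by
    ext i j
    rcases i with i | i <;> rcases j with j | j <;>
      simp [hAt, hFH, Fhat, mapC, Matrix.fromBlocks, Matrix.one_apply, Matrix.sub_apply,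
        Matrix.smul_apply, Matrix.map_apply] <;> ring
  have hz1 : z * (mapC At - μ • 1) = 0 := by
    rw [hAtblocks, hz, Matrix.fromCols_mul_fromBlocks]
    have c2 : y * (mapC (A11 - A12 * K) - μ • 1) + J * mapC (AKmat A11 A12 A21 A22 K) = 0 := by
      have : y * (mapC (A11 - A12 * K) - μ • 1) + J * mapC (AKmat A11 A12 A21 A22 K) =
          -(y * (μ • 1 - What A11 A12 A21 A22 K μ)) := by
        rw [hJ, What, ← hFH, Matrix.mul_sub, Matrix.mul_sub, Matrix.mul_add, neg_sub]
        simp only [Matrix.mul_assoc]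
        abel
      rw [this, h1, neg_zero]
    have c3 : y * mapC A12 + J * (-FH) = 0 := by
      rw [hJ, Matrix.mul_neg, Matrix.mul_assoc, Matrix.mul_assoc, hFinv, Matrix.mul_one]
      simp
    rw [c2, c3]
    apply fromColumns_zero'
    · intro i j; simp
    · intro i j; simp
  have hz2 : z * mapC (fromRows B1 (K * B1 + B2)) = 0 := by
    have hmapRows : mapC (fromRows B1 (K * B1 + B2)) =
        fromRows (mapC B1) (mapC (K * B1 + B2)) := by
      unfold mapC
      ext i j
      rcases i with i | i <;> simp [Matrix.fromRows] <;> rfl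
    rw [hmapRows, hz, Matrix.fromCols_mul_fromRows]
    have : y * mapC B1 + J * mapC (K * B1 + B2) = y * Vhat A12 A22 B1 B2 K μ := by
      rw [hJ, Vhat, ← hFH, Matrix.mul_add]
      simp only [Matrix.mul_assoc]
    rw [this, h2]
  -- transport through the similarity
  have hzTm1 : (z * mapC Tm) * (mapC A0 - μ • 1) = 0 := by
    have hcomm : mapC Tm * (mapC A0 - μ • 1) = (mapC At - μ • 1) * mapC Tm := by
      rw [Matrix.mul_sub, Matrix.sub_mul, ← mapC_mul, hTmA, mapC_mul]
      congr 1
      rw [Matrix.mul_smul, Matrix.smul_mul, Matrix.mul_one, Matrix.one_mul]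
    rw [Matrix.mul_assoc, hcomm, ← Matrix.mul_assoc, hz1, Matrix.zero_mul]
  have hzTm2 : (z * mapC Tm) * mapC (fromRows B1 B2) = 0 := by
    rw [Matrix.mul_assoc, ← mapC_mul, hTmB, hz2]
  have hzTm : z * mapC Tm = 0 := by
    have hcols : (z * mapC Tm) * (fromCols (mapC A0 - μ • 1) (mapC (fromRows B1 B2))) =
        (0 : Matrix (Fin s) ((Fin p ⊕ Fin r) ⊕ Fin m) ℂ) := by
      rw [Matrix.mul_fromCols, hzTm1, hzTm2]
      apply fromColumns_zero'
      · intro i j; simp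
      · intro i j; simp
    have h5 : z * mapC Tm * ((fromCols (mapC A0 - μ • 1) (mapC (fromRows B1 B2))) * Rfull) =
        0 := by
      rw [← Matrix.mul_assoc, hcols, Matrix.zero_mul]
    rw [hRfull] at h5
    simpa using h5
  have hzzero : z = 0 := by
    have h6 : z * (mapC Tm * mapC (fromBlocks 1 0 (-K) 1)) = 0 := by
      rw [← Matrix.mul_assoc, hzTm, Matrix.zero_mul]
    rw [← mapC_mul, hTmInv, mapC_one] at h6
    simpa using h6
  have : y = z * fromRows (1 : Matrix (Fin p) (Fin p) ℂ) (0 : Matrix (Fin r) (Fin p) ℂ) := by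
    rw [hz, Matrix.fromCols_mul_fromRows]
    simp
  rw [this, hzzero, Matrix.zero_mul]

end Kill

section SRTR

variable {p r m : ℕ}
variable (A11 : Matrix (Fin p) (Fin p) ℝ) (A12 : Matrix (Fin p) (Fin r) ℝ)
  (A21 : Matrix (Fin r) (Fin p) ℝ) (A22 : Matrix (Fin r) (Fin r) ℝ)
  (B1 : Matrix (Fin p) (Fin m) ℝ) (B2 : Matrix (Fin r) (Fin m) ℝ)
  (K : Matrix (Fin r) (Fin p) ℝ)

lemma MStab_srtrW (hK : IsHurwitz (A22 + K * A12)) : MStab (srtrW A11 A12 A21 A22 K) :=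
  (MStab.mapF _).add (((MStab.mapF _).mul (MStab_lamI_inv hK)).mul (MStab.mapF _))

lemma MStab_srtrV (hK : IsHurwitz (A22 + K * A12)) : MStab (srtrV A12 A22 B1 B2 K) :=
  (MStab.mapF _).add (((MStab.mapF _).mul (MStab_lamI_inv hK)).mul (MStab.mapF _))

lemma MStab_Sw (hK : IsHurwitz (A22 + K * A12)) :
    MStab (lam • (1 : Matrix (Fin p) (Fin p) FF) - srtrW A11 A12 A21 A22 K) :=
  (MStab.smul stable_lam MStab.one).sub (MStab_srtrW A11 A12 A21 A22 K hK)

/-- `λ I - W` is the Schur complement of `λ I - F` in `λ I - Ã`, hence invertible. -/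
lemma det_Sw_ne_zero :
    (lam • (1 : Matrix (Fin p) (Fin p) FF) - srtrW A11 A12 A21 A22 K).det ≠ 0 := by
  set Fr := A22 + K * A12 with hFr
  set At : Matrix (Fin p ⊕ Fin r) (Fin p ⊕ Fin r) ℝ :=
    fromBlocks (A11 - A12 * K) A12 (AKmat A11 A12 A21 A22 K) Fr with hAt
  have hnegblock : ∀ {a b : Type} (M : Matrix a b ℝ),
      ((-(M.map Polynomial.C)).map phiR) = -(mapF M) := by
    intro a b M
    ext i j
    simp [Matrix.map_apply, Matrix.neg_apply, map_neg, mapF, phiR, RatFunc.algebraMap_C]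
  have hblocks : lamI At = fromBlocks (lamI (A11 - A12 * K)) (-(mapF A12))
      (-(mapF (AKmat A11 A12 A21 A22 K))) (lamI Fr) := by
    rw [lamI_eq_charmatrix_map, hAt, charmatrix_fromBlocks, Matrix.fromBlocks_map,
      hnegblock A12, hnegblock (AKmat A11 A12 A21 A22 K),
      ← lamI_eq_charmatrix_map, ← lamI_eq_charmatrix_map]
  letI : Invertible (lamI Fr) := Matrix.invertibleOfIsUnitDet _ (isUnit_det_lamI Fr)
  have hdet := Matrix.det_fromBlocks₂₂ (lamI (A11 - A12 * K)) (-(mapF A12))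
    (-(mapF (AKmat A11 A12 A21 A22 K))) (lamI Fr)
  rw [← hblocks] at hdet
  have hinvOf : (⅟(lamI Fr) : Matrix (Fin r) (Fin r) FF) = (lamI Fr)⁻¹ :=
    Matrix.invOf_eq_nonsing_inv _
  have hSchur : lamI (A11 - A12 * K) - (-(mapF A12)) * ⅟(lamI Fr) *
      (-(mapF (AKmat A11 A12 A21 A22 K))) =
      lam • (1 : Matrix (Fin p) (Fin p) FF) - srtrW A11 A12 A21 A22 K := by
    rw [hinvOf, srtrW, lamI, ← hFr]
    simp only [Matrix.neg_mul, Matrix.mul_neg, neg_neg, sub_sub]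
  rw [hSchur] at hdet
  intro h0
  rw [h0, mul_zero] at hdet
  exact det_lamI_ne_zero At hdet

lemma isUnit_Sw : IsUnit (lam • (1 : Matrix (Fin p) (Fin p) FF) - srtrW A11 A12 A21 A22 K) := by
  rw [Matrix.isUnit_iff_isUnit_det]
  exact isUnit_iff_ne_zero.mpr (det_Sw_ne_zero A11 A12 A21 A22 K)

/-! ### Evaluation of the complexified SRTR pair -/

variable (μ : ℂ)

lemma Nop_psiF_of_MStab {a b : Type} {M : Matrix a b FF} (h : MStab M) (hμ : 0 ≤ μ.re) :
    Nop μ (M.map psiF) := fun i j => nopole_psiF_of_stable (h i j) hμ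

lemma Nop_map_lamI {k : Type} [Fintype k] [DecidableEq k] (M : Matrix k k ℝ) :
    Nop μ ((lamI M).map psiF) := by
  intro i j
  simp only [Matrix.map_apply, lamI, Matrix.sub_apply, Matrix.smul_apply, smul_eq_mul]
  by_cases h : i = j
  · subst h
    simp only [Matrix.one_apply_eq, mul_one]
    rw [map_sub, psiF_lam]
    have : (RatFunc.X : FC) - psiF (mapF M i i) =
        algebraMap ℂ[X] FC (Polynomial.X - Polynomial.C (algebraMap ℝ ℂ (M i i))) := by
      rw [map_sub, RatFunc.algebraMap_X]
      simp only [mapF, Matrix.map_apply, psiF_const]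
      rw [RatFunc.algebraMap_C]
      rfl
    rw [this]
    exact nopole_algebraMap _ _
  · simp only [Matrix.one_apply_ne h, mul_zero, zero_sub, map_neg]
    refine nopole.neg ?_
    simp only [mapF, Matrix.map_apply, psiF_const]
    have : (algebraMap ℂ FC (algebraMap ℝ ℂ (M i j))) =
        algebraMap ℂ[X] FC (Polynomial.C (algebraMap ℝ ℂ (M i j))) := by
      rw [RatFunc.algebraMap_C]; rfl
    rw [this]
    exact nopole_algebraMap _ _

lemma EV_map_lamI {k : Type} [Fintype k] [DecidableEq k] (M : Matrix k k ℝ) :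
    EV μ ((lamI M).map psiF) = μ • 1 - mapC M := by
  ext i j
  simp only [EV, Matrix.of_apply, Matrix.map_apply, lamI, Matrix.sub_apply, Matrix.smul_apply,
    smul_eq_mul, mapC, Matrix.map_apply]
  by_cases h : i = j
  · subst h
    simp only [Matrix.one_apply_eq, mul_one]
    rw [map_sub, psiF_lam]
    have heq : (RatFunc.X : FC) - psiF (mapF M i i) =
        algebraMap ℂ[X] FC (Polynomial.X - Polynomial.C (algebraMap ℝ ℂ (M i i))) := by
      rw [map_sub, RatFunc.algebraMap_X]
      simp only [mapF, Matrix.map_apply, psiF_const]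
      rw [RatFunc.algebraMap_C]
      rfl
    rw [heq, evv_algebraMap]
    simp
  · simp only [Matrix.one_apply_ne h, mul_zero, zero_sub, map_neg]
    simp only [mapF, Matrix.map_apply, psiF_const]
    have heq : (algebraMap ℂ FC (algebraMap ℝ ℂ (M i j))) =
        algebraMap ℂ[X] FC (Polynomial.C (algebraMap ℝ ℂ (M i j))) := by
      rw [RatFunc.algebraMap_C]; rfl
    rw [show -(algebraMap ℂ FC (algebraMap ℝ ℂ (M i j))) =
      algebraMap ℂ[X] FC (-Polynomial.C (algebraMap ℝ ℂ (M i j))) by rw [map_neg, heq]]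
    rw [evv_algebraMap]
    simp

lemma map_psiF_one {k : Type} [Fintype k] [DecidableEq k] :
    ((1 : Matrix k k FF).map psiF) = 1 := by
  ext i j
  by_cases h : i = j <;> simp [Matrix.one_apply, h]

lemma map_psiF_sub {a b : Type} (M N : Matrix a b FF) :
    (M - N).map psiF = M.map psiF - N.map psiF := by
  ext i j; simp [Matrix.map_apply, Matrix.sub_apply]

lemma map_psiF_add {a b : Type} (M N : Matrix a b FF) :
    (M + N).map psiF = M.map psiF + N.map psiF := by
  ext i j; simp [Matrix.map_apply, Matrix.add_apply]

lemma map_psiF_smul {a b : Type} (c : FF) (M : Matrix a b FF) :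
    (c • M).map psiF = psiF c • M.map psiF := by
  ext i j; simp [Matrix.map_apply, Matrix.smul_apply, smul_eq_mul]

lemma EV_Jc (hK : IsHurwitz (A22 + K * A12)) (hμ : 0 ≤ μ.re) :
    EV μ (((lamI (A22 + K * A12))⁻¹).map psiF) = (Fhat A12 A22 K μ)⁻¹ ∧
      Nop μ (((lamI (A22 + K * A12))⁻¹).map psiF) := by
  set Fr := A22 + K * A12 with hFr
  have hNop : Nop μ (((lamI Fr)⁻¹).map psiF) := Nop_psiF_of_MStab μ (MStab_lamI_inv hK) hμ
  refine ⟨?_, hNop⟩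
  have hJ : (lamI Fr)⁻¹ * (lamI Fr) = 1 := Matrix.nonsing_inv_mul _ (isUnit_det_lamI Fr)
  have hJc : ((lamI Fr)⁻¹).map psiF * ((lamI Fr).map psiF) = 1 := by
    rw [← Matrix.map_mul (f := psiF), hJ, map_psiF_one]
  have hEV : EV μ (((lamI Fr)⁻¹).map psiF) * EV μ ((lamI Fr).map psiF) = 1 := by
    rw [← EV_mul hNop (Nop_map_lamI μ Fr), hJc, EV_one]
  rw [EV_map_lamI] at hEV
  have : (Fhat A12 A22 K μ)⁻¹ = EV μ (((lamI Fr)⁻¹).map psiF) := by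
    apply Matrix.inv_eq_left_inv
    rw [Fhat, ← hFr]
    exact hEV
  exact this.symm

lemma EV_Swc (hK : IsHurwitz (A22 + K * A12)) (hμ : 0 ≤ μ.re) :
    EV μ ((lam • (1 : Matrix (Fin p) (Fin p) FF) - srtrW A11 A12 A21 A22 K).map psiF) =
      μ • 1 - What A11 A12 A21 A22 K μ := by
  have h1 : (lam • (1 : Matrix (Fin p) (Fin p) FF) - srtrW A11 A12 A21 A22 K) =
      lamI (A11 - A12 * K) -
        mapF A12 * (lamI (A22 + K * A12))⁻¹ * mapF (AKmat A11 A12 A21 A22 K) := by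
    rw [srtrW]
    rw [show lamI (A11 - A12 * K) =
      lam • (1 : Matrix (Fin p) (Fin p) FF) - mapF (A11 - A12 * K) from rfl]
    abel
  rw [h1]
  obtain ⟨hEVJ, hNopJ⟩ := EV_Jc A12 A22 K μ hK hμ
  have hNopProd : Nop μ ((mapF A12 * (lamI (A22 + K * A12))⁻¹ *
      mapF (AKmat A11 A12 A21 A22 K)).map psiF) := by
    rw [Matrix.map_mul (f := psiF), Matrix.map_mul (f := psiF)]
    exact ((Nop.mapPsi_mapF μ A12).mul hNopJ).mul (Nop.mapPsi_mapF μ _)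
  rw [map_psiF_sub]
  rw [EV_sub (Nop_map_lamI μ _) hNopProd, EV_map_lamI]
  conv_lhs => rw [Matrix.map_mul (f := psiF), Matrix.map_mul (f := psiF)]
  rw [EV_mul ((Nop.mapPsi_mapF μ A12).mul hNopJ) (Nop.mapPsi_mapF μ _),
    EV_mul (Nop.mapPsi_mapF μ A12) hNopJ]
  rw [EV_mapPsi_mapF, EV_mapPsi_mapF, hEVJ, What, sub_sub]

lemma EV_Vc (hK : IsHurwitz (A22 + K * A12)) (hμ : 0 ≤ μ.re) :
    EV μ ((srtrV A12 A22 B1 B2 K).map psiF) = Vhat A12 A22 B1 B2 K μ := by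
  obtain ⟨hEVJ, hNopJ⟩ := EV_Jc A12 A22 K μ hK hμ
  rw [srtrV, map_psiF_add]
  conv_lhs => rw [Matrix.map_mul (f := psiF), Matrix.map_mul (f := psiF)]
  rw [EV_add (Nop.mapPsi_mapF μ B1)
    (((Nop.mapPsi_mapF μ A12).mul hNopJ).mul (Nop.mapPsi_mapF μ _))]
  rw [EV_mul ((Nop.mapPsi_mapF μ A12).mul hNopJ) (Nop.mapPsi_mapF μ _),
    EV_mul (Nop.mapPsi_mapF μ A12) hNopJ]
  rw [EV_mapPsi_mapF, EV_mapPsi_mapF, EV_mapPsi_mapF, hEVJ, Vhat]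

lemma Nop_Swc (hK : IsHurwitz (A22 + K * A12)) (hμ : 0 ≤ μ.re) :
    Nop μ ((lam • (1 : Matrix (Fin p) (Fin p) FF) - srtrW A11 A12 A21 A22 K).map psiF) :=
  Nop_psiF_of_MStab μ (MStab_Sw A11 A12 A21 A22 K hK) hμ

lemma Nop_Vc (hK : IsHurwitz (A22 + K * A12)) (hμ : 0 ≤ μ.re) :
    Nop μ ((srtrV A12 A22 B1 B2 K).map psiF) :=
  Nop_psiF_of_MStab μ (MStab_srtrV A12 A22 B1 B2 K hK) hμ

end SRTR

/-! ### The key stability lemma -/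

section KeyStab

variable {p r m s : ℕ}
variable (A11 : Matrix (Fin p) (Fin p) ℝ) (A12 : Matrix (Fin p) (Fin r) ℝ)
  (A21 : Matrix (Fin r) (Fin p) ℝ) (A22 : Matrix (Fin r) (Fin r) ℝ)
  (B1 : Matrix (Fin p) (Fin m) ℝ) (B2 : Matrix (Fin r) (Fin m) ℝ)
  (K : Matrix (Fin r) (Fin p) ℝ)

lemma key_stab (hp : 0 < p) (hs : 0 < s) (hK : IsHurwitz (A22 + K * A12))
    (hctrb : CtrbPair (fromBlocks A11 A12 A21 A22) (fromRows B1 B2))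
    (Y P : Matrix (Fin s) (Fin p) FF) (Q : Matrix (Fin s) (Fin m) FF)
    (hrel1 : Y * (lam • (1 : Matrix (Fin p) (Fin p) FF) - srtrW A11 A12 A21 A22 K) = lam • P)
    (hrel2 : Y * srtrV A12 A22 B1 B2 K = lam • Q)
    (hP : MStab P) (hQ : MStab Q) : MStab Y := by
  -- it suffices to show no poles in the closed right half plane after complexifying
  suffices h : ∀ μ : ℂ, 0 ≤ μ.re → Nop μ (Y.map psiF) by
    intro i j
    apply stable_of_nopole
    intro μ hμ
    exact h μ hμ i j
  intro μ hμ
  set Yc := Y.map psiF with hYc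
  set Swc := ((lam • (1 : Matrix (Fin p) (Fin p) FF) - srtrW A11 A12 A21 A22 K).map psiF)
    with hSwc
  set Vc := ((srtrV A12 A22 B1 B2 K).map psiF) with hVc
  set Pc := P.map psiF with hPc
  set Qc := Q.map psiF with hQc
  have hNopSw : Nop μ Swc := Nop_Swc A11 A12 A21 A22 K μ hK hμ
  have hNopV : Nop μ Vc := Nop_Vc A12 A22 B1 B2 K μ hK hμ
  have hNopP : Nop μ Pc := Nop_psiF_of_MStab μ hP hμ
  have hNopQ : Nop μ Qc := Nop_psiF_of_MStab μ hQ hμ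
  have hrel1c : Yc * Swc = psiF lam • Pc := by
    rw [hYc, hSwc, hPc, ← Matrix.map_mul (f := psiF), hrel1, map_psiF_smul]
  have hrel2c : Yc * Vc = psiF lam • Qc := by
    rw [hYc, hVc, hQc, ← Matrix.map_mul (f := psiF), hrel2, map_psiF_smul]
  -- the common pole order
  set k := Finset.univ.sup (fun ij : Fin s × Fin p => rootMultiplicity μ ((Yc ij.1 ij.2).denom))
    with hk
  haveI : Nonempty (Fin s × Fin p) := ⟨(⟨0, hs⟩, ⟨0, hp⟩)⟩
  rcases Nat.eq_zero_or_pos k with hk0 | hkpos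
  · -- no poles at μ at all
    intro i j
    have : rootMultiplicity μ ((Yc i j).denom) = 0 := by
      have hle : rootMultiplicity μ ((Yc i j).denom) ≤ k := Finset.le_sup (f := fun ij : Fin s × Fin p =>
        rootMultiplicity μ ((Yc ij.1 ij.2).denom)) (Finset.mem_univ (i, j))
      omega
    exact nopole_of_rootMultiplicity_zero this
  · -- otherwise derive a contradiction
    exfalso
    set q : FC := algebraMap ℂ[X] FC ((Polynomial.X - Polynomial.C μ) ^ k) with hq
    set Y' := q • Yc with hY'
    have hNopY' : Nop μ Y' := by
      intro i j
      have hle : rootMultiplicity μ ((Yc i j).denom) ≤ k := Finset.le_sup (f := fun ij : Fin s × Fin p =>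
        rootMultiplicity μ ((Yc ij.1 ij.2).denom)) (Finset.mem_univ (i, j))
      simpa [hY', Matrix.smul_apply, smul_eq_mul, hq] using loc1 (Yc i j) hle
    -- the entry attaining the sup has nonzero value
    obtain ⟨⟨i0, j0⟩, -, hij0⟩ := Finset.exists_mem_eq_sup Finset.univ
      (Finset.univ_nonempty (α := Fin s × Fin p)) (fun ij : Fin s × Fin p =>
        rootMultiplicity μ ((Yc ij.1 ij.2).denom))
    have hmult : rootMultiplicity μ ((Yc i0 j0).denom) = k := by
      simpa using hij0.symm
    have hval : evv μ (Y' i0 j0) ≠ 0 := by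
      have hge : 1 ≤ rootMultiplicity μ ((Yc i0 j0).denom) := by
        rw [hmult]; exact hkpos
      have h2 := loc2 (Yc i0 j0) hge
      rw [hmult] at h2
      rw [hY']
      simpa [Matrix.smul_apply, smul_eq_mul, hq] using h2
    -- evaluate the relations
    have hqz : evv μ q = 0 := by
      rw [hq, evv_algebraMap]
      simp [Polynomial.eval_pow]
      omega
    have hnq : nopole μ q := nopole_algebraMap _ _
    have hnlam : nopole μ (psiF lam) := by rw [psiF_lam, ← RatFunc.algebraMap_X]; exact nopole_algebraMap _ _
    have hzero1 : EV μ Y' * EV μ Swc = 0 := by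
      rw [← EV_mul hNopY' hNopSw]
      have : Y' * Swc = q • (psiF lam • Pc) := by
        rw [hY', Matrix.smul_mul, hrel1c]
      rw [this]
      ext i j
      simp only [EV, Matrix.of_apply, Matrix.smul_apply, smul_eq_mul, Matrix.zero_apply]
      rw [evv_mul hnq (hnlam.mul (hNopP i j)), hqz, zero_mul]
    have hzero2 : EV μ Y' * EV μ Vc = 0 := by
      rw [← EV_mul hNopY' hNopV]
      have : Y' * Vc = q • (psiF lam • Qc) := by
        rw [hY', Matrix.smul_mul, hrel2c]
      rw [this]
      ext i j
      simp only [EV, Matrix.of_apply, Matrix.smul_apply, smul_eq_mul, Matrix.zero_apply]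
      rw [evv_mul hnq (hnlam.mul (hNopQ i j)), hqz, zero_mul]
    -- apply the kill lemma
    have hEVSw : EV μ Swc = μ • 1 - What A11 A12 A21 A22 K μ :=
      EV_Swc A11 A12 A21 A22 K μ hK hμ
    have hEVV : EV μ Vc = Vhat A12 A22 B1 B2 K μ := EV_Vc A12 A22 B1 B2 K μ hK hμ
    have hkill := kill_lemma A11 A12 A21 A22 B1 B2 K μ hK hctrb hμ (EV μ Y')
      (by rw [← hEVSw]; exact hzero1) (by rw [← hEVV]; exact hzero2)
    have : evv μ (Y' i0 j0) = 0 := by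
      have := congrFun (congrFun hkill i0) j0
      simpa [EV] using this
    exact hval this

end KeyStab

lemma MStab_fromRows {a b c : Type} {M : Matrix a c FF} {N : Matrix b c FF}
    (hM : MStab M) (hN : MStab N) : MStab (fromRows M N) := by
  intro i j
  rcases i with i | i
  · simpa using hM i j
  · simpa using hN i j

lemma MStab_fromColumns {a b c : Type} {M : Matrix a b FF} {N : Matrix a c FF}
    (hM : MStab M) (hN : MStab N) : MStab (fromCols M N) := by
  intro i j
  rcases j with j | j
  · simpa using hM i j
  · simpa using hN i j

lemma sandwich {n : Type} [Fintype n] [DecidableEq n] (S M X : Matrix n n FF)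
    (h1 : M * X = 1) (h2 : IsUnit S.det) : (S * M) * (X * S⁻¹) = 1 := by
  rw [Matrix.mul_assoc, ← Matrix.mul_assoc M X S⁻¹, h1, Matrix.one_mul,
    Matrix.mul_nonsing_inv _ h2]


set_option maxHeartbeats 4000000

/-- if the controller `Kc = (λ I_p - W)⁻¹ V` (with stable SRTR pair)
internally stabilizes the plant `Gp`, then the SRTR-based implementation
`K_d(λ) = [λ⁻¹ W, λ⁻¹ V]` internally stabilizes the closed loop: all entries of `H`
are stable. -/
theorem stmt_13 (p r m : ℕ) (hp : 0 < p) (hr : 0 < r) (hm : 0 < m)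
    (A11 : Matrix (Fin p) (Fin p) ℝ) (A12 : Matrix (Fin p) (Fin r) ℝ)
    (A21 : Matrix (Fin r) (Fin p) ℝ) (A22 : Matrix (Fin r) (Fin r) ℝ)
    (B1 : Matrix (Fin p) (Fin m) ℝ) (B2 : Matrix (Fin r) (Fin m) ℝ)
    (hobs : ObsPair A12 A22)
    (hctrb : CtrbPair (fromBlocks A11 A12 A21 A22) (fromRows B1 B2))
    (K : Matrix (Fin r) (Fin p) ℝ) (hK : IsHurwitz (A22 + K * A12))
    (Gp : Matrix (Fin m) (Fin p) FF)
    (hL : IsUnit (fromBlocks (1 : Matrix (Fin p) (Fin p) FF)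
      (-((lam • (1 : Matrix (Fin p) (Fin p) FF) - srtrW A11 A12 A21 A22 K)⁻¹ *
        srtrV A12 A22 B1 B2 K)) (-Gp) (1 : Matrix (Fin m) (Fin m) FF)))
    (hLstab : ∀ i j, StableF ((fromBlocks (1 : Matrix (Fin p) (Fin p) FF)
      (-((lam • (1 : Matrix (Fin p) (Fin p) FF) - srtrW A11 A12 A21 A22 K)⁻¹ *
        srtrV A12 A22 B1 B2 K)) (-Gp) (1 : Matrix (Fin m) (Fin m) FF))⁻¹ i j)) :
    let W := srtrW A11 A12 A21 A22 K
    let V := srtrV A12 A22 B1 B2 K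
    let T : Matrix (Fin p) (Fin p) FF :=
      (1 : Matrix (Fin p) (Fin p) FF) - lam⁻¹ • W - lam⁻¹ • (V * Gp)
    IsUnit T ∧
    (∀ i j, StableF ((fromRows (fromRows (1 : Matrix (Fin p) (Fin p) FF)
        (1 : Matrix (Fin p) (Fin p) FF)) Gp * T⁻¹ *
      fromCols (fromCols (1 : Matrix (Fin p) (Fin p) FF) (lam⁻¹ • W))
        (lam⁻¹ • V)) i j)) := by
  
  intro W V T
  have hW : W = srtrW A11 A12 A21 A22 K := rfl
  have hV : V = srtrV A12 A22 B1 B2 K := rfl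
  have hT : T = 1 - lam⁻¹ • W - lam⁻¹ • (V * Gp) := rfl
  clear_value W V T
  set Sw : Matrix (Fin p) (Fin p) FF :=
    lam • (1 : Matrix (Fin p) (Fin p) FF) - srtrW A11 A12 A21 A22 K with hSw
  set Kc : Matrix (Fin p) (Fin m) FF := Sw⁻¹ * srtrV A12 A22 B1 B2 K with hKc
  have hdSw : IsUnit Sw.det := isUnit_iff_ne_zero.mpr (det_Sw_ne_zero A11 A12 A21 A22 K)
  have hSwKc : Sw * Kc = srtrV A12 A22 B1 B2 K := by
    rw [hKc, ← Matrix.mul_assoc, Matrix.mul_nonsing_inv _ hdSw, Matrix.one_mul]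
  set L : Matrix (Fin p ⊕ Fin m) (Fin p ⊕ Fin m) FF :=
    fromBlocks (1 : Matrix (Fin p) (Fin p) FF) (-Kc) (-Gp)
      (1 : Matrix (Fin m) (Fin m) FF) with hLdef
  have hdetL : L.det = (1 - Gp * Kc).det := by
    rw [hLdef, Matrix.det_fromBlocks_one₁₁]
    congr 1
    simp only [Matrix.neg_mul, Matrix.mul_neg, neg_neg]
  have hdet1 : IsUnit (1 - Gp * Kc).det := by
    rw [← hdetL]
    exact (Matrix.isUnit_iff_isUnit_det L).mp hL
  have hdet2 : IsUnit ((1 - Kc * Gp).det) := by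
    rw [Matrix.det_one_sub_mul_comm]
    exact hdet1
  set X : Matrix (Fin p) (Fin p) FF := (1 - Kc * Gp)⁻¹ with hXdef
  have hX1 : (1 - Kc * Gp) * X = 1 := Matrix.mul_nonsing_inv _ hdet2
  have hX' : X - Kc * (Gp * X) = 1 := by
    have h := hX1
    rw [Matrix.sub_mul, Matrix.one_mul, Matrix.mul_assoc] at h
    exact h
  set Linv : Matrix (Fin p ⊕ Fin m) (Fin p ⊕ Fin m) FF :=
    fromBlocks X (X * Kc) (Gp * X) (1 + Gp * (X * Kc)) with hLinvdef
  have hLLinv : L * Linv = 1 := by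
    rw [hLdef, hLinvdef, Matrix.fromBlocks_multiply]
    have b11 : (1 : Matrix (Fin p) (Fin p) FF) * X + (-Kc) * (Gp * X) = 1 := by
      rw [Matrix.one_mul, Matrix.neg_mul, ← sub_eq_add_neg, ← Matrix.mul_assoc,
        Matrix.mul_assoc Kc Gp X]
      exact hX'
    have b12 : (1 : Matrix (Fin p) (Fin p) FF) * (X * Kc) +
        (-Kc) * (1 + Gp * (X * Kc)) = 0 := by
      rw [Matrix.one_mul, Matrix.neg_mul, Matrix.mul_add, Matrix.mul_one]
      have e : Kc * (Gp * (X * Kc)) = (Kc * (Gp * X)) * Kc := by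
        simp only [Matrix.mul_assoc]
      have goal_eq : X * Kc + -(Kc + Kc * (Gp * (X * Kc))) =
          (X * Kc - (Kc * (Gp * X)) * Kc) - Kc := by
        rw [e]; abel
      rw [goal_eq, ← Matrix.sub_mul, hX', Matrix.one_mul, sub_self]
    have b21 : (-Gp) * X + (1 : Matrix (Fin m) (Fin m) FF) * (Gp * X) = 0 := by
      rw [Matrix.neg_mul, Matrix.one_mul]
      abel
    have b22 : (-Gp) * (X * Kc) +
        (1 : Matrix (Fin m) (Fin m) FF) * (1 + Gp * (X * Kc)) = 1 := by
      rw [Matrix.neg_mul, Matrix.one_mul, ← Matrix.mul_assoc, Matrix.mul_assoc Gp X Kc]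
      abel
    rw [b11, b12, b21, b22, Matrix.fromBlocks_one]
  have hLinv_eq : L⁻¹ = Linv := Matrix.inv_eq_right_inv hLLinv
  rw [hLinv_eq] at hLstab
  have hXstab : MStab X := by
    intro i j
    have h := hLstab (Sum.inl i) (Sum.inl j)
    rwa [hLinvdef, Matrix.fromBlocks_apply₁₁] at h
  have hXKstab : MStab (X * Kc) := by
    intro i j
    have h := hLstab (Sum.inl i) (Sum.inr j)
    rwa [hLinvdef, Matrix.fromBlocks_apply₁₂] at h
  have hGpXstab : MStab (Gp * X) := by
    intro i j
    have h := hLstab (Sum.inr i) (Sum.inl j)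
    rwa [hLinvdef, Matrix.fromBlocks_apply₂₁] at h
  have hB22stab : MStab (1 + Gp * (X * Kc)) := by
    intro i j
    have h := hLstab (Sum.inr i) (Sum.inr j)
    rwa [hLinvdef, Matrix.fromBlocks_apply₂₂] at h
  have hGpXKstab : MStab (Gp * (X * Kc)) := by
    have heq : Gp * (X * Kc) = (1 + Gp * (X * Kc)) - 1 := by abel
    rw [heq]
    exact hB22stab.sub MStab.one
  -- the matrix Y = T⁻¹
  set Y : Matrix (Fin p) (Fin p) FF := lam • (X * Sw⁻¹) with hY
  have hYrel1 : Y * Sw = lam • X := by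
    rw [hY, Matrix.smul_mul, Matrix.mul_assoc, Matrix.nonsing_inv_mul _ hdSw, Matrix.mul_one]
  have hYrel2 : Y * srtrV A12 A22 B1 B2 K = lam • (X * Kc) := by
    rw [hY, Matrix.smul_mul, Matrix.mul_assoc, ← hKc]
  have hYstab : MStab Y := by
    refine key_stab A11 A12 A21 A22 B1 B2 K hp hp hK hctrb Y X (X * Kc) ?_ hYrel2 hXstab hXKstab
    rw [← hSw]; exact hYrel1
  have hGpYrel1 : (Gp * Y) * Sw = lam • (Gp * X) := by
    rw [Matrix.mul_assoc, hYrel1, Matrix.mul_smul]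
  have hGpYrel2 : (Gp * Y) * srtrV A12 A22 B1 B2 K = lam • (Gp * (X * Kc)) := by
    rw [Matrix.mul_assoc, hYrel2, Matrix.mul_smul]
  have hGpYstab : MStab (Gp * Y) := by
    refine key_stab A11 A12 A21 A22 B1 B2 K hp hm hK hctrb (Gp * Y) (Gp * X) (Gp * (X * Kc))
      ?_ hGpYrel2 hGpXstab hGpXKstab
    rw [← hSw]; exact hGpYrel1
  -- T and its inverse
  have hlamne : (lam : FF) ≠ 0 := RatFunc.X_ne_zero
  have hTeq : T = lam⁻¹ • (Sw * (1 - Kc * Gp)) := by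
    rw [hT, hW, hV]
    have h1 : Sw * (1 - Kc * Gp) = Sw - srtrV A12 A22 B1 B2 K * Gp := by
      rw [Matrix.mul_sub, Matrix.mul_one, ← Matrix.mul_assoc, hSwKc]
    rw [h1, hSw, smul_sub, smul_sub, smul_smul, inv_mul_cancel₀ hlamne, one_smul]
  have hTY : T * Y = 1 := by
    rw [hTeq, hY, Matrix.smul_mul, Matrix.mul_smul, smul_smul, inv_mul_cancel₀ hlamne, one_smul]
    exact sandwich Sw (1 - Kc * Gp) X hX1 hdSw
  have hTunit : IsUnit T := by
    rw [Matrix.isUnit_iff_isUnit_det]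
    exact IsUnit.of_mul_eq_one Y.det (by rw [← Matrix.det_mul, hTY, Matrix.det_one])
  have hTinv : T⁻¹ = Y := Matrix.inv_eq_right_inv hTY
  refine ⟨hTunit, ?_⟩
  -- decomposition of the columns
  have hYsplit : Y = X + X * Sw⁻¹ * srtrW A11 A12 A21 A22 K := by
    have hlam1 : lam • (1 : Matrix (Fin p) (Fin p) FF) = Sw + srtrW A11 A12 A21 A22 K := by
      rw [hSw]; abel
    calc Y = X * Sw⁻¹ * (lam • (1 : Matrix (Fin p) (Fin p) FF)) := by
          rw [hY, Matrix.mul_smul, Matrix.mul_one]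
      _ = X * Sw⁻¹ * Sw + X * Sw⁻¹ * srtrW A11 A12 A21 A22 K := by
          rw [hlam1, Matrix.mul_add]
      _ = X + X * Sw⁻¹ * srtrW A11 A12 A21 A22 K := by
          rw [Matrix.mul_assoc, Matrix.nonsing_inv_mul _ hdSw, Matrix.mul_one]
  have hZeq : X * Sw⁻¹ * srtrW A11 A12 A21 A22 K = Y - X := by
    rw [hYsplit]; abel
  have hZstab : MStab (X * Sw⁻¹ * srtrW A11 A12 A21 A22 K) := by
    rw [hZeq]; exact hYstab.sub hXstab
  have hGpZstab : MStab (Gp * (X * Sw⁻¹ * srtrW A11 A12 A21 A22 K)) := by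
    rw [hZeq, Matrix.mul_sub]
    exact hGpYstab.sub hGpXstab
  have hcol2 : Y * (lam⁻¹ • srtrW A11 A12 A21 A22 K) =
      X * Sw⁻¹ * srtrW A11 A12 A21 A22 K := by
    rw [hY, Matrix.smul_mul, Matrix.mul_smul, smul_smul, mul_inv_cancel₀ hlamne, one_smul]
  have hcol3 : Y * (lam⁻¹ • srtrV A12 A22 B1 B2 K) = X * Kc := by
    rw [hY, Matrix.smul_mul, Matrix.mul_smul, smul_smul, mul_inv_cancel₀ hlamne, one_smul,
      Matrix.mul_assoc, ← hKc]
  -- assemble the big matrix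
  have hbig : fromRows (fromRows (1 : Matrix (Fin p) (Fin p) FF)
        (1 : Matrix (Fin p) (Fin p) FF)) Gp * T⁻¹ *
      fromCols (fromCols (1 : Matrix (Fin p) (Fin p) FF) (lam⁻¹ • W)) (lam⁻¹ • V) =
      fromRows (fromRows
        (fromCols (fromCols Y (X * Sw⁻¹ * srtrW A11 A12 A21 A22 K)) (X * Kc))
        (fromCols (fromCols Y (X * Sw⁻¹ * srtrW A11 A12 A21 A22 K)) (X * Kc)))
        (fromCols (fromCols (Gp * Y) (Gp * (X * Sw⁻¹ * srtrW A11 A12 A21 A22 K)))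
          (Gp * (X * Kc))) := by
    rw [hTinv, hW, hV]
    simp only [Matrix.fromRows_mul, Matrix.one_mul]
    have hYC : Y * fromCols (fromCols (1 : Matrix (Fin p) (Fin p) FF)
        (lam⁻¹ • srtrW A11 A12 A21 A22 K)) (lam⁻¹ • srtrV A12 A22 B1 B2 K) =
        fromCols (fromCols Y (X * Sw⁻¹ * srtrW A11 A12 A21 A22 K)) (X * Kc) := by
      rw [Matrix.mul_fromCols, Matrix.mul_fromCols, Matrix.mul_one, hcol2, hcol3]
    have hGpYC : (Gp * Y) * fromCols (fromCols (1 : Matrix (Fin p) (Fin p) FF)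
        (lam⁻¹ • srtrW A11 A12 A21 A22 K)) (lam⁻¹ • srtrV A12 A22 B1 B2 K) =
        fromCols (fromCols (Gp * Y) (Gp * (X * Sw⁻¹ * srtrW A11 A12 A21 A22 K)))
          (Gp * (X * Kc)) := by
      rw [Matrix.mul_assoc, hYC, Matrix.mul_fromCols, Matrix.mul_fromCols]
    rw [hYC, hGpYC]
  intro i j
  rw [hbig]
  exact (MStab_fromRows (MStab_fromRows
    (MStab_fromColumns (MStab_fromColumns hYstab hZstab) hXKstab)
    (MStab_fromColumns (MStab_fromColumns hYstab hZstab) hXKstab))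
    (MStab_fromColumns (MStab_fromColumns hGpYstab hGpZstab) hGpXKstab)) i j
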